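/- Let Ω ⊆ ℝ³ be a connected open set and u : Ω → ℝ³ twice continuously differentiable with ε u = (grad u + (grad u)ᵀ)/2 = 0 on Ω. Then there exist a ∈ ℝ³ and a skew-symmetric matrix B ∈ K such that u(x) = a + B x for all x ∈ Ω; i.e., the kernel of the symmetric gradient on a connected open set consists exactly of the infinitesimal rigid motions. -/

import Mathlib

open Matrix

/-- A function with vanishing derivative on a preconnected open set is constant there. -/
lemma const_of_hasFDerivAt_zero {E F : Type*} [NormedAddCommGroup E] [NormedSpace ℝ E]
    [NormedAddCommGroup F] [NormedSpace ℝ F] {s : Set E} (hs : IsOpen s)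
    (hc : IsPreconnected s) {f : E → F} (hf : ∀ x ∈ s, HasFDerivAt f (0 : E →L[ℝ] F) x)
    {x y : E} (hx : x ∈ s) (hy : y ∈ s) : f x = f y := by
  haveI := Subtype.preconnectedSpace hc
  have hlc : IsLocallyConstant (fun z : s => f z) := by
    rw [IsLocallyConstant.iff_exists_open]
    rintro ⟨z, hz⟩
    obtain ⟨r, hr, hball⟩ := Metric.isOpen_iff.1 hs z hz
    refine ⟨Subtype.val ⁻¹' Metric.ball z r,
      Metric.isOpen_ball.preimage continuous_subtype_val, Metric.mem_ball_self hr, ?_⟩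
    rintro ⟨w, hw⟩ hwball
    exact (convex_ball z r).is_const_of_fderivWithin_eq_zero
      (fun p hp => ((hf p (hball hp)).differentiableAt).differentiableWithinAt)
      (fun p hp => by
        rw [fderivWithin_of_isOpen Metric.isOpen_ball hp]
        exact (hf p (hball hp)).fderiv)
      hwball (Metric.mem_ball_self hr)
  exact IsLocallyConstant.iff_is_const.mp hlc ⟨x, hx⟩ ⟨y, hy⟩

/-- The partial derivative `∂ⱼ f` of a scalar field on `ℝ³`. -/
noncomputable def pd (j : Fin 3) (f : (Fin 3 → ℝ) → ℝ) (x : Fin 3 → ℝ) : ℝ :=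
  fderiv ℝ f x (Pi.single j 1)

/-- The Jacobian matrix `(grad u)ᵢⱼ = ∂ⱼuᵢ` of a vector field `u : ℝ³ → ℝ³`. -/
noncomputable def gradM (u : (Fin 3 → ℝ) → (Fin 3 → ℝ)) (x : Fin 3 → ℝ) :
    Matrix (Fin 3) (Fin 3) ℝ :=
  Matrix.of fun i j => pd j (fun y => u y i) x

/-- The symmetric gradient `ε u = (grad u + (grad u)ᵀ)/2`. -/
noncomputable def symGrad (u : (Fin 3 → ℝ) → (Fin 3 → ℝ)) (x : Fin 3 → ℝ) :
    Matrix (Fin 3) (Fin 3) ℝ :=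
  (1 / 2 : ℝ) • (gradM u x + (gradM u x)ᵀ)

/-- On a connected open set `Ω ⊆ ℝ³`, a `C²` vector field with vanishing symmetric
gradient is an infinitesimal rigid motion: `u(x) = a + Bx` with `B` skew-symmetric. -/
theorem rigid_motion_of_symGrad_eq_zero (Ω : Set (Fin 3 → ℝ)) (hΩ : IsOpen Ω)
    (hconn : IsConnected Ω) (u : (Fin 3 → ℝ) → (Fin 3 → ℝ))
    (hu : ContDiffOn ℝ 2 u Ω) (heps : ∀ x ∈ Ω, symGrad u x = 0) :
    ∃ (a : Fin 3 → ℝ) (B : Matrix (Fin 3) (Fin 3) ℝ),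
      Bᵀ = -B ∧ ∀ x ∈ Ω, u x = a + B *ᵥ x := by
  classical
  set e : Fin 3 → (Fin 3 → ℝ) := fun j => Pi.single j 1 with he
  obtain ⟨x₀, hx₀⟩ := hconn.nonempty
  have hCA : ∀ x ∈ Ω, ContDiffAt ℝ 2 u x := fun x hx => hu.contDiffAt (hΩ.mem_nhds hx)
  have hd1 : ∀ x ∈ Ω, DifferentiableAt ℝ u x := fun x hx =>
    (hCA x hx).differentiableAt (by norm_num)
  have hdf : ∀ x ∈ Ω, DifferentiableAt ℝ (fderiv ℝ u) x := fun x hx =>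
    ((hCA x hx).fderiv_right (m := 1) (by norm_num)).differentiableAt (by norm_num)
  have hpd : ∀ x ∈ Ω, ∀ i j, pd j (fun y => u y i) x = fderiv ℝ u x (e j) i := by
    intro x hx i j
    have h : fderiv ℝ (fun y => u y i) x
        = (ContinuousLinearMap.proj i).comp (fderiv ℝ u x) :=
      ((ContinuousLinearMap.proj i : (Fin 3 → ℝ) →L[ℝ] ℝ).hasFDerivAt.comp x
        (hd1 x hx).hasFDerivAt).fderiv
    simp [pd, h, e]
  have hA : ∀ x ∈ Ω, ∀ i j, fderiv ℝ u x (e j) i + fderiv ℝ u x (e i) j = 0 := by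
    intro x hx i j
    have h0 := heps x hx
    have h1 : gradM u x + (gradM u x)ᵀ = 0 := by
      rcases smul_eq_zero.mp h0 with h | h
      · norm_num at h
      · exact h
    have h2 : gradM u x i j + (gradM u x)ᵀ i j = 0 := by
      rw [← Matrix.add_apply, h1, Matrix.zero_apply]
    simpa [gradM, Matrix.transpose_apply, Matrix.of_apply, hpd x hx] using h2
  -- second derivative vanishes on Ω
  have hH : ∀ x ∈ Ω, fderiv ℝ (fderiv ℝ u) x = 0 := by
    intro x hx
    set H := fderiv ℝ (fderiv ℝ u) x with hHdef
    have hsym : ∀ v w, H v w = H w v := fun v w =>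
      ((hCA x hx).isSymmSndFDerivAt (by simp [minSmoothness_of_isRCLikeNormedField])) v w
    have hanti : ∀ i j k, H (e k) (e j) i + H (e k) (e i) j = 0 := by
      intro i j k
      set c1 : ((Fin 3 → ℝ) →L[ℝ] (Fin 3 → ℝ)) →L[ℝ] ℝ :=
        (ContinuousLinearMap.proj i).comp (ContinuousLinearMap.apply ℝ (Fin 3 → ℝ) (e j))
        with hc1
      set c2 : ((Fin 3 → ℝ) →L[ℝ] (Fin 3 → ℝ)) →L[ℝ] ℝ :=
        (ContinuousLinearMap.proj j).comp (ContinuousLinearMap.apply ℝ (Fin 3 → ℝ) (e i))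
        with hc2
      have hψ1 : HasFDerivAt (fun y => fderiv ℝ u y (e j) i) (c1.comp H) x :=
        c1.hasFDerivAt.comp x (hdf x hx).hasFDerivAt
      have hψ2 : HasFDerivAt (fun y => fderiv ℝ u y (e i) j) (c2.comp H) x :=
        c2.hasFDerivAt.comp x (hdf x hx).hasFDerivAt
      have hφ : HasFDerivAt
          (fun y => fderiv ℝ u y (e j) i + fderiv ℝ u y (e i) j)
          (c1.comp H + c2.comp H) x := hψ1.add hψ2
      have h0 : (fun y => fderiv ℝ u y (e j) i + fderiv ℝ u y (e i) j)
          =ᶠ[nhds x] fun _ => (0 : ℝ) :=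
        Filter.eventually_of_mem (hΩ.mem_nhds hx) (fun y hy => hA y hy i j)
      have hzero : c1.comp H + c2.comp H = 0 := by
        have h1 := hφ.fderiv
        have h2 := h0.fderiv_eq (𝕜 := ℝ)
        rw [h1] at h2
        rw [h2]; simp
      have h3 := congrArg (fun T => T (e k)) hzero
      simpa [c1, c2] using h3
    have hz : ∀ i j k, H (e k) (e j) i = 0 := by
      intro i j k
      have h1 := hanti i j k
      have h2 := hanti j k i
      have h3 := hanti k i j
      have s1 := congrFun (hsym (e k) (e j)) i
      have s2 := congrFun (hsym (e k) (e i)) j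
      have s3 := congrFun (hsym (e j) (e i)) k
      linarith
    have hexp : ∀ w : Fin 3 → ℝ, w = ∑ j, w j • e j := by
      intro w
      funext m
      simp [e, Finset.sum_apply, Pi.single_apply]
    have hk : ∀ k, H (e k) = 0 := by
      intro k
      ext w
      conv_lhs => rw [hexp w]
      rw [map_sum]
      simp only [_root_.map_smul]
      -- goal : (∑ j, w j • H (e k) (e j)) = 0 pointwise? it is as functions
      have : ∀ j, H (e k) (e j) = 0 := by
        intro j; funext i; exact hz i j k
      simp [this]
    have : H = 0 := by
      ext v
      conv_lhs => rw [hexp v]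
      rw [map_sum]
      simp [hk]
    exact this
  set L := fderiv ℝ u x₀ with hLdef
  have hconst : ∀ x ∈ Ω, fderiv ℝ u x = L := by
    intro x hx
    exact const_of_hasFDerivAt_zero hΩ hconn.isPreconnected
      (fun y hy => by
        have h := (hdf y hy).hasFDerivAt
        rwa [hH y hy] at h) hx hx₀
  have hu2 : ∀ x ∈ Ω, u x - L x = u x₀ - L x₀ := by
    intro x hx
    refine const_of_hasFDerivAt_zero (f := fun y => u y - L y) hΩ hconn.isPreconnected
      (fun y hy => ?_) hx hx₀
    have h1 : HasFDerivAt u L y := by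
      have h := (hd1 y hy).hasFDerivAt
      rwa [hconst y hy] at h
    have h2 : HasFDerivAt (fun z : Fin 3 → ℝ => L z) L y := L.hasFDerivAt
    simpa using h1.sub h2
  refine ⟨u x₀ - L x₀, Matrix.of (fun i j => L (e j) i), ?_, ?_⟩
  · ext i j
    have h := hA x₀ hx₀ j i
    simp only [Matrix.transpose_apply, Matrix.neg_apply, Matrix.of_apply]
    rw [← hLdef] at h
    linarith
  · intro x hx
    have hx' := hu2 x hx
    have hexp : x = ∑ j, x j • e j := by
      funext m
      simp [e, Finset.sum_apply, Pi.single_apply]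
    have hBv : (Matrix.of (fun i j => L (e j) i)) *ᵥ x = L x := by
      funext i
      conv_rhs => rw [hexp]
      rw [map_sum]
      simp [Matrix.mulVec, dotProduct, Finset.sum_apply, mul_comm]
    rw [hBv]
    exact eq_add_of_sub_eq hx'
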